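/- Let G be a connected simple graph with minimum degree δ ≥ 2 and maximum degree Δ satisfying Δ − δ ≤ (2δ − 1)². Then H(G) ≤ R(G) ≤ X(G) < ABC(G) < GA(G), with H(G) = R(G) if and only if G is a regular graph, and R(G) = X(G) if and only if G is a cycle. -/

import Mathlib

open Finset SimpleGraph


lemma edge_HR {x y : ℝ} (hx : 2 ≤ x) (hy : 2 ≤ y) :
    2 / (x + y) ≤ 1 / Real.sqrt (x * y) := by
  have hxy : (0:ℝ) < x * y := by nlinarith
  have hs : 0 < Real.sqrt (x * y) := Real.sqrt_pos.mpr hxy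
  rw [div_le_div_iff₀ (by linarith) hs]
  have : Real.sqrt (x * y) ≤ (x + y) / 2 := by
    rw [show (x + y) / 2 = Real.sqrt (((x + y) / 2) ^ 2) by
      rw [Real.sqrt_sq (by linarith)]]
    exact Real.sqrt_le_sqrt (by nlinarith [sq_nonneg (x - y)])
  linarith

lemma edge_HR_lt {x y : ℝ} (hx : 2 ≤ x) (hy : 2 ≤ y) (hne : x ≠ y) :
    2 / (x + y) < 1 / Real.sqrt (x * y) := by
  have hxy : (0:ℝ) < x * y := by nlinarith
  have hs : 0 < Real.sqrt (x * y) := Real.sqrt_pos.mpr hxy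
  rw [div_lt_div_iff₀ (by linarith) hs]
  have : Real.sqrt (x * y) < (x + y) / 2 := by
    rw [show (x + y) / 2 = Real.sqrt (((x + y) / 2) ^ 2) by
      rw [Real.sqrt_sq (by linarith)]]
    apply Real.sqrt_lt_sqrt (le_of_lt hxy)
    have hne0 : x - y ≠ 0 := sub_ne_zero.mpr hne
    have h1 : (x - y) ^ 2 > 0 := by positivity
    nlinarith
  linarith

lemma edge_HR_eq {x y : ℝ} (hx : 2 ≤ x) (hxy : x = y) :
    2 / (x + y) = 1 / Real.sqrt (x * y) := by
  subst hxy
  rw [Real.sqrt_mul_self (by linarith)]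
  ring

lemma edge_RX {x y : ℝ} (hx : 2 ≤ x) (hy : 2 ≤ y) :
    1 / Real.sqrt (x * y) ≤ 1 / Real.sqrt (x + y) := by
  have h1 : (0:ℝ) < x + y := by linarith
  have h2 : x + y ≤ x * y := by nlinarith
  have hs : 0 < Real.sqrt (x + y) := Real.sqrt_pos.mpr h1
  have hs2 : Real.sqrt (x + y) ≤ Real.sqrt (x * y) := Real.sqrt_le_sqrt h2
  exact one_div_le_one_div_of_le hs hs2

lemma edge_RX_lt {x y : ℝ} (hx : 2 ≤ x) (hy : 2 ≤ y) (hne : ¬(x = 2 ∧ y = 2)) :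
    1 / Real.sqrt (x * y) < 1 / Real.sqrt (x + y) := by
  have h1 : (0:ℝ) < x + y := by linarith
  have h2 : x + y < x * y := by
    rcases lt_or_ge 2 x with h | h
    · nlinarith
    · have hx2 : x = 2 := le_antisymm h hx
      have hy2 : y ≠ 2 := fun h' => hne ⟨hx2, h'⟩
      have : 2 < y := lt_of_le_of_ne hy (Ne.symm hy2)
      nlinarith
  have hs : 0 < Real.sqrt (x + y) := Real.sqrt_pos.mpr h1
  exact one_div_lt_one_div_of_lt hs (Real.sqrt_lt_sqrt (le_of_lt h1) h2)

lemma edge_RX_eq : 1 / Real.sqrt ((2:ℝ) * 2) = 1 / Real.sqrt (2 + 2) := by norm_num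

lemma edge_XABC {x y : ℝ} (hx : 2 ≤ x) (hy : 2 ≤ y) :
    1 / Real.sqrt (x + y) < Real.sqrt ((x + y - 2) / (x * y)) := by
  have h1 : (0:ℝ) < x + y := by linarith
  have hxy : (0:ℝ) < x * y := by nlinarith
  rw [show 1 / Real.sqrt (x + y) = Real.sqrt (1 / (x + y)) by
    rw [one_div, one_div, Real.sqrt_inv]]
  apply Real.sqrt_lt_sqrt (by positivity)
  rw [div_lt_div_iff₀ h1 hxy]
  nlinarith

lemma edge_ABCGA {x y : ℝ} (hx : 2 ≤ x) (hxy : x ≤ y) (hb : y + 3 * x ≤ 4 * x ^ 2 + 1) :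
    Real.sqrt ((x + y - 2) / (x * y)) < 2 * Real.sqrt (x * y) / (x + y) := by
  have hy : 2 ≤ y := le_trans hx hxy
  have h1 : (0:ℝ) < x + y := by linarith
  have hxy' : (0:ℝ) < x * y := by nlinarith
  have h4 : Real.sqrt 4 = 2 := by
    rw [show (4:ℝ) = 2 ^ 2 by norm_num, Real.sqrt_sq (by norm_num)]
  have hrhs : Real.sqrt (4 * (x * y) / (x + y) ^ 2) = 2 * Real.sqrt (x * y) / (x + y) := by
    rw [Real.sqrt_div (by positivity : (0:ℝ) ≤ 4 * (x * y)) ((x + y) ^ 2),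
      Real.sqrt_mul (by norm_num : (0:ℝ) ≤ 4) (x * y), h4, Real.sqrt_sq (le_of_lt h1)]
  rw [← hrhs]
  apply Real.sqrt_lt_sqrt (div_nonneg (by linarith) (le_of_lt hxy'))
  rw [div_lt_div_iff₀ hxy' (by positivity)]
  nlinarith [sq_nonneg (x - y), sq_nonneg (x + y), sq_nonneg (x * y - x - y),
    mul_pos (by linarith : (0:ℝ) < x) (by linarith : (0:ℝ) < y),
    sq_nonneg (2 * x * y - x - y),
    mul_nonneg (by linarith : (0:ℝ) ≤ y - x) (by linarith : (0:ℝ) ≤ 4 * x ^ 2 - 3 * x + 1 - y)]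


variable {V : Type*} [Fintype V] [DecidableEq V]

/-- The sum-connectivity index `X(G) = Σ_{uv ∈ E(G)} 1/√(d_u + d_v)`. -/
noncomputable def sumConnIndex (G : SimpleGraph V) [DecidableRel G.Adj] : ℝ :=
  ∑ e ∈ G.edgeFinset, Sym2.lift
    ⟨fun u v => 1 / Real.sqrt ((G.degree u : ℝ) + (G.degree v : ℝ)),
     fun u v => by dsimp only; rw [add_comm ((G.degree u : ℝ)) ((G.degree v : ℝ))]⟩ e

/-- The Randić index `R(G) = Σ_{uv ∈ E(G)} 1/√(d_u d_v)`. -/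
noncomputable def randicIndex (G : SimpleGraph V) [DecidableRel G.Adj] : ℝ :=
  ∑ e ∈ G.edgeFinset, Sym2.lift
    ⟨fun u v => 1 / Real.sqrt ((G.degree u : ℝ) * (G.degree v : ℝ)),
     fun u v => by dsimp only; rw [mul_comm ((G.degree u : ℝ)) ((G.degree v : ℝ))]⟩ e

/-- The harmonic index `H(G) = Σ_{uv ∈ E(G)} 2/(d_u + d_v)`. -/
noncomputable def harmonicIndex (G : SimpleGraph V) [DecidableRel G.Adj] : ℝ :=
  ∑ e ∈ G.edgeFinset, Sym2.lift
    ⟨fun u v => 2 / ((G.degree u : ℝ) + (G.degree v : ℝ)),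
     fun u v => by dsimp only; rw [add_comm ((G.degree u : ℝ)) ((G.degree v : ℝ))]⟩ e

/-- The atom-bond connectivity index `ABC(G) = Σ_{uv ∈ E(G)} √((d_u + d_v − 2)/(d_u d_v))`. -/
noncomputable def abcIndex (G : SimpleGraph V) [DecidableRel G.Adj] : ℝ :=
  ∑ e ∈ G.edgeFinset, Sym2.lift
    ⟨fun u v => Real.sqrt (((G.degree u : ℝ) + (G.degree v : ℝ) - 2) /
        ((G.degree u : ℝ) * (G.degree v : ℝ))),
     fun u v => by dsimp only; rw [add_comm ((G.degree u : ℝ)) ((G.degree v : ℝ)),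
        mul_comm ((G.degree u : ℝ)) ((G.degree v : ℝ))]⟩ e

/-- The first geometric-arithmetic index `GA(G) = Σ_{uv ∈ E(G)} 2√(d_u d_v)/(d_u + d_v)`. -/
noncomputable def geoArithIndex (G : SimpleGraph V) [DecidableRel G.Adj] : ℝ :=
  ∑ e ∈ G.edgeFinset, Sym2.lift
    ⟨fun u v => 2 * Real.sqrt ((G.degree u : ℝ) * (G.degree v : ℝ)) /
        ((G.degree u : ℝ) + (G.degree v : ℝ)),
     fun u v => by dsimp only; rw [mul_comm ((G.degree u : ℝ)) ((G.degree v : ℝ)),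
        add_comm ((G.degree u : ℝ)) ((G.degree v : ℝ))]⟩ e

/-- The augmented Zagreb index `AZI(G) = Σ_{uv ∈ E(G)} (d_u d_v/(d_u + d_v − 2))³`. -/
noncomputable def augZagrebIndex (G : SimpleGraph V) [DecidableRel G.Adj] : ℝ :=
  ∑ e ∈ G.edgeFinset, Sym2.lift
    ⟨fun u v => ((G.degree u : ℝ) * (G.degree v : ℝ) /
        ((G.degree u : ℝ) + (G.degree v : ℝ) - 2)) ^ 3,
     fun u v => by dsimp only; rw [mul_comm ((G.degree u : ℝ)) ((G.degree v : ℝ)),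
        add_comm ((G.degree u : ℝ)) ((G.degree v : ℝ))]⟩ e

/-- The modified second Zagreb index `M₂*(G) = Σ_{uv ∈ E(G)} 1/(d_u d_v)`. -/
noncomputable def modSecondZagrebIndex (G : SimpleGraph V) [DecidableRel G.Adj] : ℝ :=
  ∑ e ∈ G.edgeFinset, Sym2.lift
    ⟨fun u v => 1 / ((G.degree u : ℝ) * (G.degree v : ℝ)),
     fun u v => by dsimp only; rw [mul_comm ((G.degree u : ℝ)) ((G.degree v : ℝ))]⟩ e


section Cyc
variable (G : SimpleGraph V) [DecidableRel G.Adj]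

/-- the other neighbor of `v` besides `u` -/
noncomputable def nxt (u v : V) : V :=
  if h : ((G.neighborFinset v).erase u).Nonempty then h.choose else u

variable {G}

lemma nxt_mem {u v : V} (hne : ((G.neighborFinset v).erase u).Nonempty) :
    nxt G u v ∈ (G.neighborFinset v).erase u := by
  unfold nxt
  rw [dif_pos hne]
  exact hne.choose_spec

lemma erase_eq (h2 : ∀ v, G.degree v = 2) {u v : V} (h : G.Adj u v) :
    (G.neighborFinset v).erase u = {nxt G u v} := by
  have hc : ((G.neighborFinset v).erase u).card = 1 := by
    rw [Finset.card_erase_of_mem (by simp [h.symm]), G.card_neighborFinset_eq_degree, h2]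
  obtain ⟨w, hw⟩ := Finset.card_eq_one.mp hc
  have hne : ((G.neighborFinset v).erase u).Nonempty := by rw [hw]; simp
  have : nxt G u v = w := Finset.mem_singleton.mp (hw ▸ nxt_mem hne)
  rw [hw, this]

lemma nxt_spec (h2 : ∀ v, G.degree v = 2) {u v : V} (h : G.Adj u v) :
    G.Adj v (nxt G u v) ∧ nxt G u v ≠ u := by
  have hmem : nxt G u v ∈ (G.neighborFinset v).erase u := by
    rw [erase_eq h2 h]; simp
  simp only [Finset.mem_erase, mem_neighborFinset] at hmem
  exact ⟨hmem.2, hmem.1⟩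

lemma nxt_uniq (h2 : ∀ v, G.degree v = 2) {u v : V} (h : G.Adj u v) {x : V}
    (hx : G.Adj v x) (hxu : x ≠ u) : x = nxt G u v := by
  have : x ∈ (G.neighborFinset v).erase u := by simp [hx, hxu]
  rw [erase_eq h2 h] at this
  simpa using this

variable (G) in
/-- walking pairs -/
noncomputable def gseq (u v : V) : ℕ → V × V
  | 0 => (u, v)
  | k + 1 => ((gseq u v k).2, nxt G (gseq u v k).1 (gseq u v k).2)

lemma gseq_adj (h2 : ∀ v, G.degree v = 2) {v₀ v₁ : V} (h01 : G.Adj v₀ v₁) :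
    ∀ k, G.Adj (gseq G v₀ v₁ k).1 (gseq G v₀ v₁ k).2
  | 0 => h01
  | k + 1 => (nxt_spec h2 (gseq_adj h2 h01 k)).1

variable (G) in
noncomputable def fseq (v₀ v₁ : V) (k : ℕ) : V := (gseq G v₀ v₁ k).1

lemma fseq_succ (v₀ v₁ : V) (k : ℕ) : fseq G v₀ v₁ (k + 1) = (gseq G v₀ v₁ k).2 := rfl

lemma fseq_adj (h2 : ∀ v, G.degree v = 2) {v₀ v₁ : V} (h01 : G.Adj v₀ v₁) (k : ℕ) :
    G.Adj (fseq G v₀ v₁ k) (fseq G v₀ v₁ (k + 1)) := by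
  rw [fseq_succ]; exact gseq_adj h2 h01 k

lemma fseq_two (v₀ v₁ : V) (k : ℕ) :
    fseq G v₀ v₁ (k + 2) = nxt G (fseq G v₀ v₁ k) (fseq G v₀ v₁ (k + 1)) := rfl

lemma fseq_two_ne (h2 : ∀ v, G.degree v = 2) {v₀ v₁ : V} (h01 : G.Adj v₀ v₁) (k : ℕ) :
    fseq G v₀ v₁ (k + 2) ≠ fseq G v₀ v₁ k := by
  rw [fseq_two]
  exact (nxt_spec h2 (fseq_adj h2 h01 k)).2

lemma fseq_uniq (h2 : ∀ v, G.degree v = 2) {v₀ v₁ : V} (h01 : G.Adj v₀ v₁) {k : ℕ} {x : V}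
    (hx : G.Adj (fseq G v₀ v₁ (k + 1)) x) (hxu : x ≠ fseq G v₀ v₁ k) :
    x = fseq G v₀ v₁ (k + 2) := by
  rw [fseq_two]
  exact nxt_uniq h2 (fseq_adj h2 h01 k) hx hxu

end Cyc

section T
variable {G : SimpleGraph V} [DecidableRel G.Adj]

theorem twoRegular_iso_cycle (hG : G.Connected)
    (h2 : ∀ v, G.degree v = 2) :
    ∃ m, 3 ≤ m ∧ Nonempty (G ≃g cycleGraph m) := by
  classical
  haveI : Nonempty V := hG.nonempty
  obtain ⟨v₀⟩ := ‹Nonempty V›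
  have hd : 0 < (G.neighborFinset v₀).card := by
    rw [G.card_neighborFinset_eq_degree, h2]; norm_num
  obtain ⟨v₁, hv₁⟩ := Finset.card_pos.mp hd
  rw [mem_neighborFinset] at hv₁
  obtain ⟨f, hf0, hadjf, htwo_ne, huniq⟩ :
      ∃ f : ℕ → V, f 0 = v₀ ∧ (∀ k, G.Adj (f k) (f (k + 1))) ∧
        (∀ k, f (k + 2) ≠ f k) ∧
        (∀ k x, G.Adj (f (k + 1)) x → x ≠ f k → x = f (k + 2)) :=
    ⟨fseq G v₀ v₁, rfl, fseq_adj h2 hv₁, fseq_two_ne h2 hv₁,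
      fun _ _ hx hxu => fseq_uniq h2 hv₁ hx hxu⟩
  -- existence of a repeat
  have hrep : ∃ j, ∃ i, i < j ∧ f i = f j := by
    obtain ⟨x, y, hxy, hfxy⟩ := Finite.exists_ne_map_eq_of_infinite f
    rcases lt_or_gt_of_ne hxy with h | h
    · exact ⟨y, x, h, hfxy⟩
    · exact ⟨x, y, h, hfxy.symm⟩
  obtain ⟨m, ⟨i, him, hfi⟩, hmin⟩ :
      ∃ m, (∃ i, i < m ∧ f i = f m) ∧ ∀ j < m, ¬∃ i, i < j ∧ f i = f j :=
    ⟨Nat.find hrep, Nat.find_spec hrep, fun j hj => Nat.find_min hrep hj⟩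
  have injOn : ∀ i j, i < j → j < m → f i ≠ f j := by
    intro i j h1 h2' heq
    exact hmin j h2' ⟨i, h1, heq⟩
  -- i = 0
  have hi0 : i = 0 := by
    by_contra hi
    obtain ⟨i', rfl⟩ : ∃ i', i = i' + 1 := ⟨i - 1, by omega⟩
    have hne1 : m ≠ i' + 1 + 1 := by
      intro h
      exact (hadjf (i' + 1)).ne (by rw [← h, hfi])
    have hne2 : m ≠ i' + 1 + 2 := by
      intro h
      exact htwo_ne (i' + 1) (by rw [← h]; exact hfi.symm)
    have hm4 : i' + 4 ≤ m := by omega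
    obtain ⟨m', rfl⟩ : ∃ m', m = m' + 1 := ⟨m - 1, by omega⟩
    have hadj : G.Adj (f (i' + 1)) (f m') := by
      have := hadjf m'
      rw [hfi]
      exact this.symm
    have hne' : f m' ≠ f i' := Ne.symm (injOn i' m' (by omega) (by omega))
    have := huniq i' (f m') hadj hne'
    exact injOn (i' + 2) m' (by omega) (by omega) this.symm
  subst hi0
  have hm0 : f m = f 0 := hfi.symm
  have hm3 : 3 ≤ m := by
    by_contra hlt
    have h12 : m = 1 ∨ m = 2 := by omega
    rcases h12 with rfl | rfl
    · exact (hadjf 0).ne' hm0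
    · exact htwo_ne 0 hm0
  have key : ∀ (v x y : V), G.Adj v x → G.Adj v y → x ≠ y →
      G.neighborFinset v = {x, y} := by
    intro v x y hx hy hxy
    refine (Finset.eq_of_subset_of_card_le ?_ ?_).symm
    · intro z hz
      simp only [Finset.mem_insert, Finset.mem_singleton] at hz
      rcases hz with rfl | rfl <;> simp [hx, hy]
    · rw [G.card_neighborFinset_eq_degree, h2, Finset.card_insert_of_notMem (by simp [hxy]),
        Finset.card_singleton]
  set S := (Finset.range m).image f with hS
  have hinjOn : Set.InjOn f (Finset.range m) := by
    intro a ha b hb hab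
    simp only [Finset.coe_range, Set.mem_Iio] at ha hb
    by_contra hne
    rcases lt_or_gt_of_ne hne with h | h
    · exact injOn a b h hb hab
    · exact injOn b a h ha hab.symm
  have hcardS : S.card = m := by
    rw [hS, Finset.card_image_of_injOn hinjOn, Finset.card_range]
  have hclosed : ∀ k < m, ∀ w, G.Adj (f k) w → w ∈ S := by
    intro k hk w hw
    have hmemS : ∀ j < m, f j ∈ S := fun j hj =>
      Finset.mem_image.mpr ⟨j, Finset.mem_range.mpr hj, rfl⟩
    rcases Nat.eq_zero_or_eq_succ_pred k with rfl | hk'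
    · have ha1 : G.Adj (f 0) (f 1) := hadjf 0
      have ha2 : G.Adj (f 0) (f (m - 1)) := by
        have := hadjf (m - 1)
        rw [show m - 1 + 1 = m by omega, hm0] at this
        exact this.symm
      have hne12 : f 1 ≠ f (m - 1) := injOn 1 (m - 1) (by omega) (by omega)
      have hkey := key (f 0) (f 1) (f (m - 1)) ha1 ha2 hne12
      have hwmem : w ∈ G.neighborFinset (f 0) := by rwa [mem_neighborFinset]
      rw [hkey] at hwmem
      simp only [Finset.mem_insert, Finset.mem_singleton] at hwmem
      rcases hwmem with rfl | rfl
      · exact hmemS 1 (by omega)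
      · exact hmemS (m - 1) (by omega)
    · obtain ⟨k', rfl⟩ : ∃ k', k = k' + 1 := ⟨k - 1, hk'⟩
      have ha1 : G.Adj (f (k' + 1)) (f k') := (hadjf k').symm
      have ha2 : G.Adj (f (k' + 1)) (f (k' + 2)) := hadjf (k' + 1)
      have hne12 : f k' ≠ f (k' + 2) := (htwo_ne k').symm
      have hkey := key (f (k' + 1)) (f k') (f (k' + 2)) ha1 ha2 hne12
      have hwmem : w ∈ G.neighborFinset (f (k' + 1)) := by rwa [mem_neighborFinset]
      rw [hkey] at hwmem
      simp only [Finset.mem_insert, Finset.mem_singleton] at hwmem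
      rcases hwmem with rfl | rfl
      · exact hmemS k' (by omega)
      · rcases Nat.lt_or_ge (k' + 2) m with h | h
        · exact hmemS (k' + 2) h
        · have hmk : k' + 2 = m := by omega
          rw [hmk, hm0]
          exact hmemS 0 (by omega)
  have hSuniv : ∀ v, v ∈ S := by
    have hwalk : ∀ (u w : V), G.Walk u w → u ∈ S → w ∈ S := by
      intro u w p
      induction p with
      | nil => exact id
      | @cons u' x w' h p ih =>
        intro hu
        apply ih
        obtain ⟨k, hk, rfl⟩ := Finset.mem_image.mp hu
        exact hclosed k (Finset.mem_range.mp hk) x h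
    intro v
    exact hwalk (f 0) v (hG.preconnected (f 0) v).some
      (Finset.mem_image.mpr ⟨0, Finset.mem_range.mpr (by omega), rfl⟩)
  have hmcard : m = Fintype.card V := by
    rw [← hcardS, Finset.eq_univ_iff_forall.mpr hSuniv]
    exact (Finset.card_univ)
  obtain ⟨m', rfl⟩ : ∃ m'', m = m'' + 3 := ⟨m - 3, by omega⟩
  refine ⟨m' + 3, by omega, ?_⟩
  obtain ⟨F, hFdef⟩ : ∃ F : Fin (m' + 3) → V, ∀ a, F a = f a.val :=
    ⟨fun a => f a.val, fun _ => rfl⟩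
  have hFinj : Function.Injective F := by
    intro a b hab
    rw [hFdef, hFdef] at hab
    have hv : (a : ℕ) = (b : ℕ) := by
      by_contra hne
      rcases lt_or_gt_of_ne hne with h | h
      · exact injOn a b h b.isLt hab
      · exact injOn b a h a.isLt hab.symm
    exact Fin.ext hv
  have hFbij : Function.Bijective F :=
    (Fintype.bijective_iff_injective_and_card F).mpr ⟨hFinj, by simp [← hmcard]⟩
  have adjF : ∀ a : Fin (m' + 3), G.Adj (F a) (F (a + 1)) := by
    intro a
    have hval : ((a + 1 : Fin (m' + 3)) : ℕ) = ((a : ℕ) + 1) % (m' + 3) := by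
      simp [Fin.add_def]
    rw [hFdef, hFdef]
    rcases Nat.lt_or_ge ((a : ℕ) + 1) (m' + 3) with h | h
    · have hv : ((a + 1 : Fin (m' + 3)) : ℕ) = (a : ℕ) + 1 := by
        rw [hval, Nat.mod_eq_of_lt h]
      rw [hv]
      exact hadjf a
    · have ha : (a : ℕ) = m' + 2 := by have := a.isLt; omega
      have hv : ((a + 1 : Fin (m' + 3)) : ℕ) = 0 := by
        rw [hval, ha, show m' + 2 + 1 = m' + 3 from rfl]
        exact Nat.mod_self _
      rw [hv, ha, ← hm0]
      exact hadjf (m' + 2)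
  have hsub : ∀ a : Fin (m' + 3), (a - 1) + 1 = a := by intro a; abel
  have hne11 : ∀ a : Fin (m' + 3), a - 1 ≠ a + 1 := by
    intro a h
    have h2' : (1 : Fin (m' + 3)) + 1 = 0 := by
      calc (1 : Fin (m' + 3)) + 1 = a + 1 - a + 1 := by abel
      _ = a - 1 - a + 1 := by rw [← h]
      _ = 0 := by abel
    have hval : ((1 : Fin (m' + 3)) + 1 : Fin (m' + 3)).val = 0 := by rw [h2']; rfl
    have hval2 : ((1 : Fin (m' + 3)) + 1 : Fin (m' + 3)).val = 2 := by
      rw [Fin.add_def, Fin.val_one]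
      exact Nat.mod_eq_of_lt (by omega)
    omega
  have hnbrF : ∀ a : Fin (m' + 3), G.neighborFinset (F a) = {F (a - 1), F (a + 1)} := by
    intro a
    refine key (F a) (F (a - 1)) (F (a + 1)) ?_ (adjF a) ?_
    · have := adjF (a - 1)
      rw [hsub a] at this
      exact this.symm
    · exact fun h => hne11 a (hFinj h)
  have hadj_iff : ∀ a b : Fin (m' + 3), G.Adj (F a) (F b) ↔ (cycleGraph (m' + 3)).Adj a b := by
    intro a b
    have hcyc : (cycleGraph (m' + 3)).Adj a b ↔ a - b = 1 ∨ b - a = 1 :=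
      cycleGraph_adj (n := m' + 1)
    rw [hcyc]
    constructor
    · intro h
      have hb : F b ∈ G.neighborFinset (F a) := by rwa [mem_neighborFinset]
      rw [hnbrF a] at hb
      simp only [Finset.mem_insert, Finset.mem_singleton] at hb
      rcases hb with h' | h'
      · left
        rw [hFinj h']
        abel
      · right
        rw [hFinj h']
        abel
    · intro h
      rcases h with h | h
      · have hab : a = b + 1 := by
          have := congrArg (fun x => x + b) h
          simpa [sub_add_cancel, add_comm] using this
        rw [hab]
        exact (adjF b).symm
      · have hab : b = a + 1 := by
          have := congrArg (fun x => x + a) h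
          simpa [sub_add_cancel, add_comm] using this
        rw [hab]
        exact adjF a
  refine ⟨SimpleGraph.Iso.symm (⟨Equiv.ofBijective F hFbij, fun {a b} => ?_⟩ :
    cycleGraph (m' + 3) ≃g G)⟩
  show G.Adj (F a) (F b) ↔ _
  exact hadj_iff a b

end T

variable (G : SimpleGraph V) [DecidableRel G.Adj]

theorem stmt8 (hG : G.Connected) (hδ : 2 ≤ G.minDegree)
    (hΔδ : G.maxDegree - G.minDegree ≤ (2 * G.minDegree - 1) ^ 2) :
    harmonicIndex G ≤ randicIndex G ∧
    randicIndex G ≤ sumConnIndex G ∧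
    sumConnIndex G < abcIndex G ∧
    abcIndex G < geoArithIndex G ∧
    (harmonicIndex G = randicIndex G ↔ ∃ k, G.IsRegularOfDegree k) ∧
    (randicIndex G = sumConnIndex G ↔
      ∃ m, 3 ≤ m ∧ Nonempty (G ≃g cycleGraph m)) := by
  
  classical
  haveI : Nonempty V := hG.nonempty
  set v₀ := Classical.arbitrary V with hv₀
  have hdeg2 : ∀ v, 2 ≤ G.degree v := fun v => le_trans hδ (G.minDegree_le_degree v)
  have hdeg2R : ∀ v : V, (2:ℝ) ≤ (G.degree v : ℝ) := fun v => by exact_mod_cast hdeg2 v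
  -- bound from the max/min degree hypothesis
  have hΔ : ∀ v, (G.degree v : ℝ) ≤ (G.minDegree : ℝ) + (2 * (G.minDegree : ℝ) - 1) ^ 2 := by
    intro v
    have h1 : G.maxDegree ≤ (2 * G.minDegree - 1) ^ 2 + G.minDegree :=
      Nat.sub_le_iff_le_add.mp hΔδ
    have h2 : G.degree v ≤ (2 * G.minDegree - 1) ^ 2 + G.minDegree :=
      le_trans (G.degree_le_maxDegree v) h1
    have h3 : ((2 * G.minDegree - 1 : ℕ) : ℝ) = 2 * (G.minDegree : ℝ) - 1 := by
      have : (1:ℕ) ≤ 2 * G.minDegree := by omega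
      push_cast [Nat.cast_sub this]
      ring
    calc (G.degree v : ℝ) ≤ ((2 * G.minDegree - 1) ^ 2 + G.minDegree : ℕ) := by
          exact_mod_cast h2
      _ = (G.minDegree : ℝ) + (2 * (G.minDegree : ℝ) - 1) ^ 2 := by push_cast [h3]; ring
  have hδ2R : (2:ℝ) ≤ (G.minDegree : ℝ) := by exact_mod_cast hδ
  have hbound : ∀ u v : V, (G.degree u : ℝ) ≤ (G.degree v : ℝ) →
      (G.degree v : ℝ) + 3 * (G.degree u : ℝ) ≤ 4 * (G.degree u : ℝ) ^ 2 + 1 := by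
    intro u v huv
    have h1 := hΔ v
    have h2 : (G.minDegree : ℝ) ≤ (G.degree u : ℝ) := by
      exact_mod_cast G.minDegree_le_degree u
    nlinarith [mul_nonneg (by linarith : (0:ℝ) ≤ (G.degree u : ℝ) - G.minDegree)
      (by linarith : (0:ℝ) ≤ (G.degree u : ℝ) + G.minDegree - 1)]
  -- nonempty edge set
  have hEne : G.edgeFinset.Nonempty := by
    have hd : 0 < (G.neighborFinset v₀).card := by
      rw [G.card_neighborFinset_eq_degree]
      have := hdeg2 v₀
      omega
    obtain ⟨v₁, hv₁⟩ := Finset.card_pos.mp hd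
    rw [mem_neighborFinset] at hv₁
    exact ⟨s(v₀, v₁), by rw [mem_edgeFinset, mem_edgeSet]; exact hv₁⟩
  have hHR : harmonicIndex G ≤ randicIndex G := by
    unfold harmonicIndex randicIndex
    apply Finset.sum_le_sum
    intro e he
    revert he
    induction e using Sym2.ind with
    | _ u v =>
      intro _
      rw [Sym2.lift_mk, Sym2.lift_mk]; dsimp only
      exact edge_HR (hdeg2R u) (hdeg2R v)
  have hRX : randicIndex G ≤ sumConnIndex G := by
    unfold randicIndex sumConnIndex
    apply Finset.sum_le_sum
    intro e he
    revert he
    induction e using Sym2.ind with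
    | _ u v =>
      intro _
      rw [Sym2.lift_mk, Sym2.lift_mk]; dsimp only
      exact edge_RX (hdeg2R u) (hdeg2R v)
  have hXABC : sumConnIndex G < abcIndex G := by
    unfold sumConnIndex abcIndex
    apply Finset.sum_lt_sum_of_nonempty hEne
    intro e he
    revert he
    induction e using Sym2.ind with
    | _ u v =>
      intro _
      rw [Sym2.lift_mk, Sym2.lift_mk]; dsimp only
      exact edge_XABC (hdeg2R u) (hdeg2R v)
  have hABCGA : abcIndex G < geoArithIndex G := by
    unfold abcIndex geoArithIndex
    apply Finset.sum_lt_sum_of_nonempty hEne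
    intro e he
    revert he
    induction e using Sym2.ind with
    | _ u v =>
      intro _
      rw [Sym2.lift_mk, Sym2.lift_mk]; dsimp only
      rcases le_total ((G.degree u : ℝ)) ((G.degree v : ℝ)) with h | h
      · exact edge_ABCGA (hdeg2R u) h (hbound u v h)
      · have := edge_ABCGA (hdeg2R v) h (hbound v u h)
        rw [show (G.degree u : ℝ) + (G.degree v : ℝ) = (G.degree v : ℝ) + (G.degree u : ℝ)
            from add_comm _ _,
          show (G.degree u : ℝ) * (G.degree v : ℝ) = (G.degree v : ℝ) * (G.degree u : ℝ)
            from mul_comm _ _]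
        exact this
  refine ⟨hHR, hRX, hXABC, hABCGA, ⟨?_, ?_⟩, ⟨?_, ?_⟩⟩
  · -- H = R → regular
    intro heq
    have hadjeq : ∀ u v, G.Adj u v → G.degree u = G.degree v := by
      intro u v huv
      by_contra hne
      have hlt : harmonicIndex G < randicIndex G := by
        unfold harmonicIndex randicIndex
        apply Finset.sum_lt_sum
        · intro e he
          revert he
          induction e using Sym2.ind with
          | _ a b =>
            intro _
            rw [Sym2.lift_mk, Sym2.lift_mk]; dsimp only
            exact edge_HR (hdeg2R a) (hdeg2R b)
        · refine ⟨s(u, v), by rw [mem_edgeFinset, mem_edgeSet]; exact huv, ?_⟩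
          rw [Sym2.lift_mk, Sym2.lift_mk]; dsimp only
          exact edge_HR_lt (hdeg2R u) (hdeg2R v) (by exact_mod_cast hne)
      exact absurd heq (ne_of_lt hlt)
    have hwalkdeg : ∀ (u w : V) (p : G.Walk u w), G.degree u = G.degree w := by
      intro u w p
      induction p with
      | nil => rfl
      | cons h p ih => exact (hadjeq _ _ h).trans ih
    exact ⟨G.degree v₀, fun v => hwalkdeg v v₀ (hG.preconnected v v₀).some⟩
  · -- regular → H = R
    rintro ⟨k, hk⟩
    have hk2 : (2:ℝ) ≤ (k : ℝ) := by rw [← hk v₀]; exact hdeg2R v₀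
    unfold harmonicIndex randicIndex
    apply Finset.sum_congr rfl
    intro e he
    revert he
    induction e using Sym2.ind with
    | _ u v =>
      intro _
      rw [Sym2.lift_mk, Sym2.lift_mk]; dsimp only; rw [hk u, hk v]
      exact edge_HR_eq hk2 rfl
  · -- R = X → cycle
    intro heq
    have hadj22 : ∀ u v, G.Adj u v → G.degree u = 2 := by
      intro u v huv
      by_contra hne
      have hlt : randicIndex G < sumConnIndex G := by
        unfold randicIndex sumConnIndex
        apply Finset.sum_lt_sum
        · intro e he
          revert he
          induction e using Sym2.ind with
          | _ a b =>
            intro _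
            rw [Sym2.lift_mk, Sym2.lift_mk]; dsimp only
            exact edge_RX (hdeg2R a) (hdeg2R b)
        · refine ⟨s(u, v), by rw [mem_edgeFinset, mem_edgeSet]; exact huv, ?_⟩
          rw [Sym2.lift_mk, Sym2.lift_mk]; dsimp only
          apply edge_RX_lt (hdeg2R u) (hdeg2R v)
          rintro ⟨h1, -⟩
          exact hne (by exact_mod_cast h1)
      exact absurd heq (ne_of_lt hlt)
    have h2 : ∀ v, G.degree v = 2 := by
      intro v
      have hd : 0 < (G.neighborFinset v).card := by
        rw [G.card_neighborFinset_eq_degree]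
        have := hdeg2 v
        omega
      obtain ⟨w, hw⟩ := Finset.card_pos.mp hd
      rw [mem_neighborFinset] at hw
      exact hadj22 v w hw
    exact twoRegular_iso_cycle hG h2
  · -- cycle → R = X
    rintro ⟨m, hm3, ⟨e⟩⟩
    obtain ⟨m', rfl⟩ : ∃ m'', m = m'' + 3 := ⟨m - 3, by omega⟩
    have h2 : ∀ v, G.degree v = 2 := by
      intro v
      have hcard : G.degree v = (cycleGraph (m' + 3)).degree (e v) := by
        rw [← card_neighborSet_eq_degree, ← card_neighborSet_eq_degree]
        exact Fintype.card_congr (e.mapNeighborSet v)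
      rw [hcard]
      exact cycleGraph_degree_three_le
    unfold randicIndex sumConnIndex
    apply Finset.sum_congr rfl
    intro ed hed
    revert hed
    induction ed using Sym2.ind with
    | _ u v =>
      intro _
      rw [Sym2.lift_mk, Sym2.lift_mk]; dsimp only; rw [h2 u, h2 v]
      push_cast
      exact edge_RX_eq
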